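/- The 4×4 matrix over F_{m^2} with ω on the diagonal, entries C_{12}=C_{21}=C_{13}=C_{31}=C_{24}=C_{42}=1, C_{34}=C_{43}=α for any α ∈ F_m \ {0,1}, and zeros elsewhere, generates (over F_m) a self-dual additive (4, m^4, 3) MDS code for every prime power m ≥ 3, with weight enumerator W(1,y) = 1 + 4(m^2−1) y^3 + (m^2−3)(m^2−1) y^4. -/

import Mathlib

open scoped BigOperators

def hermForm {K : Type*} [Field K] (p r m : ℕ) (ω : K) {n : ℕ} (u v : Fin n → K) : K :=
  ∑ i ∈ Finset.range r,
    (((∑ j, u j * v j ^ m) - ∑ j, u j ^ m * v j) / (ω - ω ^ m)) ^ p ^ i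

namespace Stmt17Aux

def psi {F K : Type} [Field F] [Field K] [Algebra F K] (ω : K) (α : F) (q : Fin 4 → F) :
    Fin 4 → K :=
  ![algebraMap F K (q 0) * ω + algebraMap F K (q 1 + q 2),
    algebraMap F K (q 1) * ω + algebraMap F K (q 0 + q 3),
    algebraMap F K (q 2) * ω + algebraMap F K (q 0 + q 3 * α),
    algebraMap F K (q 3) * ω + algebraMap F K (q 1 + q 2 * α)]

def par {F : Type} [Field F] (α : F) (j : Fin 4) (z : F × F) : Fin 4 → F :=
  ![![0, z.1, -z.1, z.2],
    ![-z.1, 0, z.2, z.1],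
    ![-(z.1 * α), z.2, 0, z.1],
    ![z.2, -(z.1 * α), z.1, 0]] j

end Stmt17Aux

open Stmt17Aux in
set_option maxHeartbeats 1000000 in
theorem stmt17 (p r m : ℕ) (hp : p.Prime) (hr : 0 < r) (hm : m = p ^ r) (hm3 : 3 ≤ m)
    (F K : Type) [Field F] [Fintype F] [Field K] [Fintype K] [DecidableEq K]
    [Algebra F K] (hF : Fintype.card F = m) (hK : Fintype.card K = m ^ 2)
    (ω : K) (hω : ∀ x : K, x ≠ 0 → ∃ k : ℕ, ω ^ k = x)
    (α : F) (hα0 : α ≠ 0) (hα1 : α ≠ 1)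
    (C : Submodule F (Fin 4 → K))
    (hC : C = Submodule.span F (Set.range
      ![![ω, 1, 1, 0],
        ![1, ω, 0, 1],
        ![1, 0, ω, algebraMap F K α],
        ![0, 1, algebraMap F K α, ω]])) :
    (∀ u, u ∈ C ↔ ∀ c ∈ C, hermForm p r m ω u c = 0) ∧
    Nat.card C = m ^ 4 ∧
    (∀ c ∈ C, c ≠ 0 → 3 ≤ (Finset.univ.filter fun j => c j ≠ 0).card) ∧
    Nat.card {c : Fin 4 → K // c ∈ C ∧
        (Finset.univ.filter fun j => c j ≠ 0).card = 3} = 4 * (m ^ 2 - 1) ∧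
    Nat.card {c : Fin 4 → K // c ∈ C ∧
        (Finset.univ.filter fun j => c j ≠ 0).card = 4} = (m ^ 2 - 3) * (m ^ 2 - 1) := by
  classical
  subst hC
  set φ := algebraMap F K with hφdef
  set v : Fin 4 → (Fin 4 → K) :=
    ![![ω, 1, 1, 0], ![1, ω, 0, 1], ![1, 0, ω, φ α], ![0, 1, φ α, ω]] with hv
  have hp2 : 2 ≤ p := hp.two_le
  have hfact : Fact p.Prime := ⟨hp⟩
  have hmm2 : m < m ^ 2 := by nlinarith
  have hm2 : 9 ≤ m ^ 2 := by nlinarith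
  -- characteristic
  have hcharK : CharP K p := by
    have h1 : CharP K (ringChar K) := ringChar.charP K
    obtain ⟨n, hq, hcard⟩ := FiniteField.card K (ringChar K)
    have hdvd : p ∣ (ringChar K) ^ (n : ℕ) := by
      rw [← hcard, hK, hm, ← pow_mul]
      exact dvd_pow_self p (by positivity)
    exact ((Nat.prime_dvd_prime_iff_eq hp hq).mp (hp.dvd_of_dvd_pow hdvd)) ▸ h1
  -- power facts
  have hKpow : ∀ x : K, (x ^ m) ^ m = x := by
    intro x
    rw [← pow_mul, show m * m = m ^ 2 by ring, ← hK]
    exact FiniteField.pow_card x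
  have hFpow : ∀ x : F, x ^ m = x := fun x => by rw [← hF]; exact FiniteField.pow_card x
  have hφm : ∀ a : F, φ a ^ m = φ a := fun a => by rw [← map_pow, hFpow]
  have haddm : ∀ x y : K, (x + y) ^ m = x ^ m + y ^ m := by
    intro x y; simp only [hm]; exact add_pow_char_pow x y p r
  have hsubm : ∀ x y : K, (x - y) ^ m = x ^ m - y ^ m := by
    intro x y; simp only [hm]; exact sub_pow_char_pow x y r
  -- omega facts
  have hω0 : ω ≠ 0 := by
    intro h0
    have hsub : ¬ (Finset.univ : Finset K) ⊆ {0, 1} := by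
      intro hs
      have h1 := Finset.card_le_card hs
      have h2 : ({0, 1} : Finset K).card ≤ 2 :=
        (Finset.card_insert_le _ _).trans (by simp)
      rw [Finset.card_univ, hK] at h1
      clear * - h1 h2 hm2
      omega
    obtain ⟨x, -, hx⟩ := Finset.not_subset.mp hsub
    obtain ⟨k, hk⟩ := hω x (by intro h; exact hx (by simp [h]))
    cases k with
    | zero => exact hx (by simp [← hk])
    | succ n =>
      rw [h0, zero_pow (Nat.succ_ne_zero n)] at hk
      exact hx (by simp [← hk])
  have hωm : ω ^ m ≠ ω := by
    intro he
    have h1 : ω ^ (m - 1) = 1 := by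
      have h2 : ω ^ (m - 1) * ω = 1 * ω := by
        rw [← pow_succ, show m - 1 + 1 = m by omega, he, one_mul]
      exact mul_right_cancel₀ hω0 h2
    have himg : (Finset.univ.filter fun x : K => x ≠ 0) ⊆
        Finset.image (fun i : Fin (m - 1) => ω ^ (i : ℕ)) Finset.univ := by
      intro x hx
      simp only [Finset.mem_filter] at hx
      obtain ⟨k, hk⟩ := hω x hx.2
      simp only [Finset.mem_image]
      refine ⟨⟨k % (m - 1), Nat.mod_lt _ (by omega)⟩, Finset.mem_univ _, ?_⟩
      calc ω ^ (k % (m - 1)) = ω ^ (k % (m - 1)) * (ω ^ (m - 1)) ^ (k / (m - 1)) := by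
            rw [h1, one_pow, mul_one]
        _ = ω ^ (k % (m - 1) + (m - 1) * (k / (m - 1))) := by rw [← pow_mul, ← pow_add]
        _ = ω ^ k := by rw [Nat.mod_add_div]
        _ = x := hk
    have hc1 := Finset.card_le_card himg
    have hc2 : (Finset.univ.filter fun x : K => x ≠ 0).card = m ^ 2 - 1 := by
      rw [Finset.filter_ne' Finset.univ 0, Finset.card_erase_of_mem (Finset.mem_univ 0),
        Finset.card_univ, hK]
    have hc3 := (Finset.card_image_le
      (f := fun i : Fin (m - 1) => ω ^ (i : ℕ)) (s := Finset.univ)).trans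
      (by simp : (Finset.univ : Finset (Fin (m - 1))).card ≤ m - 1)
    clear * - hc1 hc2 hc3 hm2 hmm2 hm3
    omega
  have hωW : ω - ω ^ m ≠ 0 := sub_ne_zero.mpr (Ne.symm hωm)
  have hφinj : Function.Injective φ := (algebraMap F K).injective
  have hindep : ∀ a b : F, φ a * ω + φ b = 0 → a = 0 ∧ b = 0 := by
    intro a b h
    by_cases ha : a = 0
    · subst ha
      simp only [map_zero, zero_mul, zero_add] at h
      exact ⟨rfl, hφinj (by rw [h, map_zero])⟩
    · exfalso
      have hφa : φ a ≠ 0 := fun h' => ha (hφinj (by rw [h', map_zero]))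
      have hω' : ω = φ (-b / a) := by
        rw [map_div₀, map_neg, eq_div_iff hφa]
        linear_combination h
      apply hωm
      rw [hω', hφm]
  have hdecomp : ∀ x : K, ∃ a b : F, x = φ a + φ b * ω := by
    have hbij : Function.Bijective (fun z : F × F => φ z.1 + φ z.2 * ω) := by
      rw [Fintype.bijective_iff_injective_and_card]
      constructor
      · intro z z' hzz
        simp only at hzz
        have h0 : φ (z.2 - z'.2) * ω + φ (z.1 - z'.1) = 0 := by
          rw [map_sub, map_sub]; linear_combination hzz
        obtain ⟨h1, h2⟩ := hindep _ _ h0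
        have h1' := sub_eq_zero.mp h1
        have h2' := sub_eq_zero.mp h2
        exact Prod.ext h2' h1'
      · rw [Fintype.card_prod, hF, hK]; ring
    intro x
    obtain ⟨z, hz⟩ := hbij.2 x
    exact ⟨z.1, z.2, hz.symm⟩
  -- membership
  have hsum : ∀ q : Fin 4 → F, (∑ i, q i • v i) = psi ω α q := by
    intro q
    funext j
    rw [Finset.sum_apply]
    fin_cases j <;>
      simp [v, psi, Fin.sum_univ_four, Algebra.smul_def, map_add, map_mul] <;> ring
  have hmem : ∀ u : Fin 4 → K,
      u ∈ Submodule.span F (Set.range v) ↔ ∃ q : Fin 4 → F, psi ω α q = u := by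
    intro u
    rw [Submodule.mem_span_range_iff_exists_fun]
    constructor
    · rintro ⟨q, hq⟩; exact ⟨q, by rw [← hq, hsum]⟩
    · rintro ⟨q, hq⟩; exact ⟨q, by rw [hsum, hq]⟩
  have hψ0 : psi ω α (0 : Fin 4 → F) = 0 := by
    funext j; fin_cases j <;> simp [psi]
  have hkey : ∀ (aa bb x y : F), φ aa * ω + φ x = φ bb * ω + φ y → aa = bb ∧ x = y := by
    intro aa bb x y hxy
    have h := hindep (aa - bb) (x - y) (by rw [map_sub, map_sub]; linear_combination hxy)
    exact ⟨sub_eq_zero.mp h.1, sub_eq_zero.mp h.2⟩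
  have hψinj : Function.Injective (psi ω α) := by
    intro q q' h
    have e0 := congrFun h 0
    have e1 := congrFun h 1
    have e2 := congrFun h 2
    have e3 := congrFun h 3
    obtain ⟨f0, f0'⟩ := hkey _ _ _ _ e0
    obtain ⟨f1, f1'⟩ := hkey _ _ _ _ e1
    obtain ⟨f2, f2'⟩ := hkey _ _ _ _ e2
    obtain ⟨f3, f3'⟩ := hkey _ _ _ _ e3
    funext k
    fin_cases k
    · exact f0
    · exact f1
    · exact f2
    · exact f3
  -- two zero coordinates force zero
  have hα1' : (1 : F) - α ≠ 0 := sub_ne_zero.mpr (Ne.symm hα1)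
  have hpair : ∀ q : Fin 4 → F, ∀ i j : Fin 4, i < j →
      psi ω α q i = 0 → psi ω α q j = 0 → q = 0 := by
    intro q i j hij hi hj
    fin_cases i <;> fin_cases j <;> try exact absurd hij (by decide)
    · -- (0,1)
      obtain ⟨ha, hbc⟩ := hindep _ _ hi
      obtain ⟨hb, had⟩ := hindep _ _ hj
      funext k; fin_cases k
      · exact ha
      · exact hb
      · exact (show q 2 = 0 by linear_combination hbc - hb)
      · exact (show q 3 = 0 by linear_combination had - ha)
    · -- (0,2)
      obtain ⟨ha, hbc⟩ := hindep _ _ hi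
      obtain ⟨hc, hada⟩ := hindep _ _ hj
      have hq3 : q 3 = 0 := by
        have h3 : q 3 * α = 0 := by linear_combination hada - ha
        exact (mul_eq_zero.mp h3).resolve_right hα0
      funext k; fin_cases k
      · exact ha
      · exact (show q 1 = 0 by linear_combination hbc - hc)
      · exact hc
      · exact hq3
    · -- (0,3)
      obtain ⟨ha, hbc⟩ := hindep _ _ hi
      obtain ⟨hd, hbca⟩ := hindep _ _ hj
      have hq2 : q 2 = 0 := by
        have h3 : q 2 * (1 - α) = 0 := by linear_combination hbc - hbca
        exact (mul_eq_zero.mp h3).resolve_right hα1'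
      funext k; fin_cases k
      · exact ha
      · exact (show q 1 = 0 by linear_combination hbc - hq2)
      · exact hq2
      · exact hd
    · -- (1,2)
      obtain ⟨hb, had⟩ := hindep _ _ hi
      obtain ⟨hc, hada⟩ := hindep _ _ hj
      have hq3 : q 3 = 0 := by
        have h3 : q 3 * (1 - α) = 0 := by linear_combination had - hada
        exact (mul_eq_zero.mp h3).resolve_right hα1'
      funext k; fin_cases k
      · exact (show q 0 = 0 by linear_combination had - hq3)
      · exact hb
      · exact hc
      · exact hq3
    · -- (1,3)
      obtain ⟨hb, had⟩ := hindep _ _ hi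
      obtain ⟨hd, hbca⟩ := hindep _ _ hj
      have hq2 : q 2 = 0 := by
        have h3 : q 2 * α = 0 := by linear_combination hbca - hb
        exact (mul_eq_zero.mp h3).resolve_right hα0
      funext k; fin_cases k
      · exact (show q 0 = 0 by linear_combination had - hd)
      · exact hb
      · exact hq2
      · exact hd
    · -- (2,3)
      obtain ⟨hc, hada⟩ := hindep _ _ hi
      obtain ⟨hd, hbca⟩ := hindep _ _ hj
      funext k; fin_cases k
      · exact (show q 0 = 0 by linear_combination hada - α * hd)
      · exact (show q 1 = 0 by linear_combination hbca - α * hc)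
      · exact hc
      · exact hd
  have htwo : ∀ q : Fin 4 → F, ∀ i j : Fin 4, i ≠ j →
      psi ω α q i = 0 → psi ω α q j = 0 → q = 0 := by
    intro q i j hij hi hj
    rcases (Ne.lt_or_gt hij) with h | h
    · exact hpair q i j h hi hj
    · exact hpair q j i h hj hi
  -- nondegeneracy of trace
  have hsubfield : ∀ z : K, z ^ m = z → ∃ e : F, φ e = z := by
    intro z hz
    by_contra hcon
    push_neg at hcon
    set P : Polynomial K := Polynomial.X ^ m - Polynomial.X with hP
    have hPdeg : P.natDegree = m := by
      rw [hP, Polynomial.natDegree_sub_eq_left_of_natDegree_lt, Polynomial.natDegree_X_pow]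
      rw [Polynomial.natDegree_X, Polynomial.natDegree_X_pow]
      omega
    have hP0 : P ≠ 0 := by
      intro h
      rw [h, Polynomial.natDegree_zero] at hPdeg
      omega
    have hroot : ∀ w : K, w ^ m = w → w ∈ P.roots := by
      intro w hw
      rw [Polynomial.mem_roots hP0]
      simp [Polynomial.IsRoot, hP, hw]
    have hsubS : insert z (Finset.univ.image φ) ⊆ P.roots.toFinset := by
      intro w hw
      rw [Multiset.mem_toFinset]
      rcases Finset.mem_insert.mp hw with h | h
      · exact h ▸ hroot _ hz
      · obtain ⟨e, -, rfl⟩ := Finset.mem_image.mp h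
        exact hroot _ (hφm e)
    have hcS : (insert z (Finset.univ.image φ)).card = m + 1 := by
      rw [Finset.card_insert_of_notMem, Finset.card_image_of_injective _ hφinj,
        Finset.card_univ, hF]
      intro hmem'
      obtain ⟨e, -, he⟩ := Finset.mem_image.mp hmem'
      exact hcon e he
    have hle := (Finset.card_le_card hsubS).trans
      ((Multiset.toFinset_card_le _).trans (Polynomial.card_roots' P))
    rw [hPdeg, hcS] at hle
    omega
  have htrace : ∃ e₀ : F, ∑ k ∈ Finset.range r, (φ e₀) ^ p ^ k ≠ 0 := by
    set Q : Polynomial K := ∑ k ∈ Finset.range r, Polynomial.X ^ p ^ k with hQ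
    have hQc : Q.coeff (p ^ (r - 1)) = 1 := by
      rw [hQ, Polynomial.finset_sum_coeff]
      rw [Finset.sum_eq_single (r - 1)]
      · rw [Polynomial.coeff_X_pow]
        simp
      · intro b hb hbne
        rw [Polynomial.coeff_X_pow, if_neg]
        intro h
        exact hbne (Nat.pow_right_injective hp2 h).symm
      · intro h
        exact absurd (Finset.mem_range.mpr (by omega)) h
    have hQ0 : Q ≠ 0 := by
      intro h
      rw [h, Polynomial.coeff_zero] at hQc
      exact one_ne_zero hQc.symm
    have hQdeg : Q.natDegree ≤ p ^ (r - 1) := by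
      rw [hQ]
      refine Polynomial.natDegree_sum_le_of_forall_le _ _ (fun k hk => ?_)
      rw [Polynomial.natDegree_X_pow]
      exact Nat.pow_le_pow_right (by omega) (by have := Finset.mem_range.mp hk; omega)
    have hlt : p ^ (r - 1) < m := by
      rw [hm]
      exact Nat.pow_lt_pow_right (by omega) (by omega)
    have hnotsub : ¬ (Finset.univ.image φ) ⊆ Q.roots.toFinset := by
      intro hsub
      have h1 := Finset.card_le_card hsub
      have h2 := (Multiset.toFinset_card_le _).trans (Polynomial.card_roots' Q)
      rw [Finset.card_image_of_injective _ hφinj, Finset.card_univ, hF] at h1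
      clear * - h1 h2 hQdeg hlt
      omega
    obtain ⟨w, hw1, hw2⟩ := Finset.not_subset.mp hnotsub
    obtain ⟨e₀, -, rfl⟩ := Finset.mem_image.mp hw1
    refine ⟨e₀, fun hzero => hw2 ?_⟩
    rw [Multiset.mem_toFinset, Polynomial.mem_roots hQ0]
    unfold Polynomial.IsRoot
    rw [hQ, Polynomial.eval_finset_sum]
    simpa using hzero
  have traceA : ∀ t : K, t ^ m = t →
      (∀ e : F, ∑ k ∈ Finset.range r, (φ e * t) ^ p ^ k = 0) → t = 0 := by
    intro t htm hall
    by_contra ht0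
    obtain ⟨e₀, he₀⟩ := htrace
    have hz : (φ e₀ * t⁻¹) ^ m = φ e₀ * t⁻¹ := by
      rw [mul_pow, hφm, inv_pow, htm]
    obtain ⟨e, he⟩ := hsubfield _ hz
    have het : φ e * t = φ e₀ := by
      rw [he]
      field_simp
    have h2 := hall e
    rw [het] at h2
    exact he₀ h2
  -- self-duality
  have hpw0 : ∀ q : Fin 4 → F, (psi ω α q 0) ^ m = φ (q 0) * ω ^ m + φ (q 1 + q 2) :=
    fun q => by
      rw [show psi ω α q 0 = φ (q 0) * ω + φ (q 1 + q 2) from rfl, haddm, mul_pow, hφm, hφm]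
  have hpw1 : ∀ q : Fin 4 → F, (psi ω α q 1) ^ m = φ (q 1) * ω ^ m + φ (q 0 + q 3) :=
    fun q => by
      rw [show psi ω α q 1 = φ (q 1) * ω + φ (q 0 + q 3) from rfl, haddm, mul_pow, hφm, hφm]
  have hpw2 : ∀ q : Fin 4 → F, (psi ω α q 2) ^ m = φ (q 2) * ω ^ m + φ (q 0 + q 3 * α) :=
    fun q => by
      rw [show psi ω α q 2 = φ (q 2) * ω + φ (q 0 + q 3 * α) from rfl, haddm, mul_pow, hφm,
        hφm]
  have hpw3 : ∀ q : Fin 4 → F, (psi ω α q 3) ^ m = φ (q 3) * ω ^ m + φ (q 1 + q 2 * α) :=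
    fun q => by
      rw [show psi ω α q 3 = φ (q 3) * ω + φ (q 1 + q 2 * α) from rfl, haddm, mul_pow, hφm,
        hφm]
  have hcoe0 : ∀ q : Fin 4 → F, psi ω α q 0 = φ (q 0) * ω + φ (q 1 + q 2) := fun _ => rfl
  have hcoe1 : ∀ q : Fin 4 → F, psi ω α q 1 = φ (q 1) * ω + φ (q 0 + q 3) := fun _ => rfl
  have hcoe2 : ∀ q : Fin 4 → F, psi ω α q 2 = φ (q 2) * ω + φ (q 0 + q 3 * α) := fun _ => rfl
  have hcoe3 : ∀ q : Fin 4 → F, psi ω α q 3 = φ (q 3) * ω + φ (q 1 + q 2 * α) := fun _ => rfl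
  have hforward : ∀ u ∈ Submodule.span F (Set.range v), ∀ c ∈ Submodule.span F (Set.range v),
      hermForm p r m ω u c = 0 := by
    intro u hu c hc
    obtain ⟨q, rfl⟩ := (hmem u).mp hu
    obtain ⟨q', rfl⟩ := (hmem c).mp hc
    have h0 : (∑ j, psi ω α q j * psi ω α q' j ^ m) - ∑ j, psi ω α q j ^ m * psi ω α q' j
        = 0 := by
      rw [Fin.sum_univ_four, Fin.sum_univ_four]
      rw [hpw0 q', hpw1 q', hpw2 q', hpw3 q', hpw0 q, hpw1 q, hpw2 q, hpw3 q]
      rw [hcoe0 q, hcoe1 q, hcoe2 q, hcoe3 q, hcoe0 q', hcoe1 q', hcoe2 q', hcoe3 q']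
      simp only [map_add, map_mul]
      ring
    simp only [hermForm]
    rw [h0, zero_div]
    exact Finset.sum_eq_zero fun i _ => zero_pow (pow_ne_zero i (by omega))
  have hzm : (0 : K) ^ m = 0 := zero_pow (by omega)
  have hback : ∀ u : Fin 4 → K,
      (∀ c ∈ Submodule.span F (Set.range v), hermForm p r m ω u c = 0) →
      u ∈ Submodule.span F (Set.range v) := by
    intro u H
    -- step 1: S(u, c) = 0 for all c in the span
    have hS0 : ∀ c ∈ Submodule.span F (Set.range v),
        (∑ j, u j * c j ^ m) - ∑ j, u j ^ m * c j = 0 := by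
      intro c hc
      set t : K := ((∑ j, u j * c j ^ m) - ∑ j, u j ^ m * c j) / (ω - ω ^ m) with ht
      have hs1 : (∑ j, u j * c j ^ m) ^ m = ∑ j, u j ^ m * c j := by
        rw [Fin.sum_univ_four, Fin.sum_univ_four, haddm, haddm, haddm, mul_pow, mul_pow,
          mul_pow, mul_pow, hKpow, hKpow, hKpow, hKpow]
      have hs2 : (∑ j, u j ^ m * c j) ^ m = ∑ j, u j * c j ^ m := by
        rw [Fin.sum_univ_four, Fin.sum_univ_four, haddm, haddm, haddm, mul_pow, mul_pow,
          mul_pow, mul_pow, hKpow, hKpow, hKpow, hKpow]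
      have htm : t ^ m = t := by
        rw [ht, div_pow, hsubm, hs1, hs2, hsubm, hKpow,
          show (∑ j, u j ^ m * c j) - ∑ j, u j * c j ^ m
            = -(((∑ j, u j * c j ^ m) - ∑ j, u j ^ m * c j)) by ring,
          show ω ^ m - ω = -(ω - ω ^ m) by ring, neg_div_neg_eq]
      have hall : ∀ e : F, ∑ k ∈ Finset.range r, (φ e * t) ^ p ^ k = 0 := by
        intro e
        have hec := H (e • c) (Submodule.smul_mem _ _ hc)
        simp only [hermForm] at hec
        have hsm : ∀ j, (e • c) j = φ e * c j := fun j => by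
          simp [Pi.smul_apply, Algebra.smul_def, φ]
        have hnum : ((∑ j, u j * ((e • c) j) ^ m) - ∑ j, u j ^ m * ((e • c) j)) / (ω - ω ^ m)
            = φ e * t := by
          simp only [hsm, mul_pow, hφm]
          rw [ht]
          simp only [Fin.sum_univ_four]
          field_simp
        rw [hnum] at hec
        exact hec
      have ht0 : t = 0 := traceA t htm hall
      rw [ht] at ht0
      exact (div_eq_zero_iff.mp ht0).resolve_right hωW
    -- step 2: decompose u over the subfield
    have hdec := fun j => hdecomp (u j)
    choose x y hxy using hdec
    have hupow : ∀ j, (u j) ^ m = φ (x j) + φ (y j) * ω ^ m := by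
      intro j
      rw [hxy j, haddm, mul_pow, hφm, hφm]
    have hgen : ∀ i : Fin 4, v i ∈ Submodule.span F (Set.range v) :=
      fun i => Submodule.subset_span ⟨i, rfl⟩
    -- step 3: extract the four linear relations
    have hφrel : ∀ w : F, φ w * (ω - ω ^ m) = 0 → w = 0 := by
      intro w hw
      have h3 := (mul_eq_zero.mp hw).resolve_right hωW
      exact hφinj (by rw [h3, map_zero])
    have h0 := hS0 (v 0) (hgen 0)
    have h1 := hS0 (v 1) (hgen 1)
    have h2 := hS0 (v 2) (hgen 2)
    have h3 := hS0 (v 3) (hgen 3)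
    rw [Fin.sum_univ_four, Fin.sum_univ_four] at h0 h1 h2 h3
    simp only [hv, Matrix.cons_val_zero, Matrix.cons_val_one, Matrix.head_cons,
      Matrix.cons_val_two, Matrix.cons_val_three, Matrix.tail_cons, Matrix.head_fin_const,
      hzm, one_pow, mul_zero, mul_one, zero_mul, one_mul, add_zero, zero_add] at h0 h1 h2 h3
    simp only [hupow] at h0 h1 h2 h3
    simp only [hxy, hφm] at h0 h1 h2 h3
    have hrel0 : x 0 = y 1 + y 2 := by
      have hw := hφrel (y 1 + y 2 - x 0)
        (by simp only [map_sub, map_add]; linear_combination h0)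
      linear_combination -hw
    have hrel1 : x 1 = y 0 + y 3 := by
      have hw := hφrel (y 0 + y 3 - x 1)
        (by simp only [map_sub, map_add]; linear_combination h1)
      linear_combination -hw
    have hrel2 : x 2 = y 0 + y 3 * α := by
      have hw := hφrel (y 0 + y 3 * α - x 2)
        (by simp only [map_sub, map_add, map_mul]; linear_combination h2)
      linear_combination -hw
    have hrel3 : x 3 = y 1 + y 2 * α := by
      have hw := hφrel (y 1 + y 2 * α - x 3)
        (by simp only [map_sub, map_add, map_mul]; linear_combination h3)
      linear_combination -hw
    refine (hmem u).mpr ⟨y, funext fun j => ?_⟩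
    fin_cases j
    · show psi ω α y 0 = u 0
      rw [hcoe0 y, hxy 0, hrel0]; push_cast [map_add]; ring
    · show psi ω α y 1 = u 1
      rw [hcoe1 y, hxy 1, hrel1]; push_cast [map_add]; ring
    · show psi ω α y 2 = u 2
      rw [hcoe2 y, hxy 2, hrel2]; push_cast [map_add, map_mul]; ring
    · show psi ω α y 3 = u 3
      rw [hcoe3 y, hxy 3, hrel3]; push_cast [map_add, map_mul]; ring
  -- cardinality
  have hcardC : Nat.card (Submodule.span F (Set.range v)) = m ^ 4 := by
    have hb : Function.Bijective (fun q : Fin 4 → F =>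
        (⟨psi ω α q, (hmem _).mpr ⟨q, rfl⟩⟩ : Submodule.span F (Set.range v))) := by
      constructor
      · intro q q' h
        exact hψinj (by simpa [Subtype.ext_iff] using h)
      · rintro ⟨u, hu⟩
        obtain ⟨q, hq⟩ := (hmem u).mp hu
        exact ⟨q, Subtype.ext hq⟩
    rw [← Nat.card_eq_of_bijective _ hb, Nat.card_eq_fintype_card, Fintype.card_fun, hF,
      Fintype.card_fin]
  -- weight 3
  have hwt3of : ∀ (q : Fin 4 → F), q ≠ 0 → ∀ j₀ : Fin 4, psi ω α q j₀ = 0 →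
      (Finset.univ.filter fun j => psi ω α q j ≠ 0).card = 3 := by
    intro q hq0 j₀ hj₀
    have hzf : (Finset.univ.filter fun j => psi ω α q j = 0) = {j₀} := by
      ext k
      simp only [Finset.mem_filter, Finset.mem_univ, true_and, Finset.mem_singleton]
      constructor
      · intro hk
        by_contra hkj
        exact hq0 (htwo q k j₀ hkj hk hj₀)
      · rintro rfl; exact hj₀
    have hsplit := Finset.card_filter_add_card_filter_not
      (s := (Finset.univ : Finset (Fin 4))) (fun j => psi ω α q j ≠ 0)
    have hneg : (Finset.univ.filter fun j => ¬ psi ω α q j ≠ 0) = {j₀} := by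
      rw [← hzf]; simp [not_not]
    rw [hneg] at hsplit
    simp only [Finset.card_univ, Fintype.card_fin, Finset.card_singleton] at hsplit
    clear * - hsplit
    omega
  have hpar0 : ∀ (j : Fin 4), par α j (0 : F × F) = 0 := by
    intro j
    fin_cases j <;> funext k <;> fin_cases k <;>
      simp [par, Prod.fst_zero, Prod.snd_zero, Matrix.vecHead, Matrix.vecTail]
  have hparz : ∀ (j : Fin 4) (z : F × F), psi ω α (par α j z) j = 0 := by
    intro j z; fin_cases j <;> simp [par, psi]
  have hparinj : ∀ (j : Fin 4) (z z' : F × F), par α j z = par α j z' → z = z' := by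
    intro j z z' h
    fin_cases j
    · exact Prod.ext (congrFun h 1) (congrFun h 3)
    · exact Prod.ext (congrFun h 3) (congrFun h 2)
    · exact Prod.ext (congrFun h 3) (congrFun h 1)
    · exact Prod.ext (congrFun h 2) (congrFun h 0)
  have hparne : ∀ (j : Fin 4) (z : F × F), z ≠ 0 → par α j z ≠ 0 := by
    intro j z hz h
    exact hz (hparinj j z 0 (by rw [h, hpar0 j]))
  have hA' : Nat.card {q : Fin 4 → F // q ≠ 0 ∧ ∃ j, psi ω α q j = 0} = 4 * (m ^ 2 - 1) := by
    have hbij : Function.Bijective (fun w : Fin 4 × {z : F × F // z ≠ 0} =>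
        (⟨par α w.1 w.2.1, hparne w.1 w.2.1 w.2.2, w.1, hparz w.1 w.2.1⟩ :
          {q : Fin 4 → F // q ≠ 0 ∧ ∃ j, psi ω α q j = 0})) := by
      constructor
      · rintro ⟨j, z, hz⟩ ⟨j', z', hz'⟩ hww
        simp only [Subtype.mk.injEq] at hww
        by_cases hjj : j = j'
        · subst hjj
          exact Prod.ext rfl (Subtype.ext (hparinj j z z' hww))
        · exfalso
          have hzj' : psi ω α (par α j z) j' = 0 := by rw [hww]; exact hparz j' z'
          exact hparne j z hz (htwo _ j j' hjj (hparz j z) hzj')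
      · rintro ⟨q, hq0, j, hj⟩
        fin_cases j
        · obtain ⟨ha, hbc⟩ := hindep _ _ hj
          have hparq : par α 0 ((q 1, q 3) : F × F) = q := by
            funext k; fin_cases k
            · exact ha.symm
            · rfl
            · exact (show -(q 1) = q 2 by linear_combination -hbc)
            · rfl
          exact ⟨⟨0, ⟨(q 1, q 3), fun hzz => hq0 (by rw [← hparq, hzz, hpar0])⟩⟩,
            Subtype.ext hparq⟩
        · obtain ⟨hb, had⟩ := hindep _ _ hj
          have hparq : par α 1 ((q 3, q 2) : F × F) = q := by
            funext k; fin_cases k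
            · exact (show -(q 3) = q 0 by linear_combination -had)
            · exact hb.symm
            · rfl
            · rfl
          exact ⟨⟨1, ⟨(q 3, q 2), fun hzz => hq0 (by rw [← hparq, hzz, hpar0])⟩⟩,
            Subtype.ext hparq⟩
        · obtain ⟨hc, hada⟩ := hindep _ _ hj
          have hparq : par α 2 ((q 3, q 1) : F × F) = q := by
            funext k; fin_cases k
            · exact (show -(q 3 * α) = q 0 by linear_combination -hada)
            · rfl
            · exact hc.symm
            · rfl
          exact ⟨⟨2, ⟨(q 3, q 1), fun hzz => hq0 (by rw [← hparq, hzz, hpar0])⟩⟩,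
            Subtype.ext hparq⟩
        · obtain ⟨hd, hbca⟩ := hindep _ _ hj
          have hparq : par α 3 ((q 2, q 0) : F × F) = q := by
            funext k; fin_cases k
            · rfl
            · exact (show -(q 2 * α) = q 1 by linear_combination -hbca)
            · rfl
            · exact hd.symm
          exact ⟨⟨3, ⟨(q 2, q 0), fun hzz => hq0 (by rw [← hparq, hzz, hpar0])⟩⟩,
            Subtype.ext hparq⟩
    have hcz : Fintype.card {z : F × F // z ≠ 0} = m ^ 2 - 1 := by
      rw [Fintype.card_subtype_compl, Fintype.card_subtype_eq, Fintype.card_prod, hF,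
        pow_two]
    rw [← Nat.card_eq_of_bijective _ hbij, Nat.card_prod, Nat.card_eq_fintype_card,
      Nat.card_eq_fintype_card, Fintype.card_fin, hcz]
  have hcount3 : Nat.card {c : Fin 4 → K // c ∈ Submodule.span F (Set.range v) ∧
      (Finset.univ.filter fun j => c j ≠ 0).card = 3} = 4 * (m ^ 2 - 1) := by
    rw [← hA']
    refine Eq.symm (Nat.card_eq_of_bijective (fun w =>
      ⟨psi ω α w.1, (hmem _).mpr ⟨w.1, rfl⟩, by
        obtain ⟨hq0, j, hj⟩ := w.2
        exact hwt3of w.1 hq0 j hj⟩) ⟨?_, ?_⟩)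
    · intro w w' h
      exact Subtype.ext (hψinj (by simpa [Subtype.ext_iff] using h))
    · rintro ⟨c, hcC, hc3⟩
      obtain ⟨q, rfl⟩ := (hmem c).mp hcC
      have hq0 : q ≠ 0 := by
        rintro rfl
        simp [hψ0] at hc3
      have hsplit := Finset.card_filter_add_card_filter_not
        (s := (Finset.univ : Finset (Fin 4))) (fun j => psi ω α q j ≠ 0)
      rw [hc3] at hsplit
      simp only [Finset.card_univ, Fintype.card_fin] at hsplit
      have hpos : 0 < (Finset.univ.filter fun j => ¬ psi ω α q j ≠ 0).card := by
        clear * - hsplit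
        omega
      obtain ⟨j, hjmem⟩ := Finset.card_pos.mp hpos
      have hj : psi ω α q j = 0 := not_not.mp (Finset.mem_filter.mp hjmem).2
      exact ⟨⟨q, hq0, j, hj⟩, rfl⟩
  have hB : Nat.card {q : Fin 4 → F // ∀ j, psi ω α q j ≠ 0}
      = (m ^ 2 - 3) * (m ^ 2 - 1) := by
    have hsplitA := Finset.card_filter_add_card_filter_not
      (s := (Finset.univ : Finset (Fin 4 → F))) (fun q => ∃ j, psi ω α q j = 0)
    have hnegA : (Finset.univ.filter fun q : Fin 4 → F => ¬ ∃ j, psi ω α q j = 0)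
        = Finset.univ.filter (fun q => ∀ j, psi ω α q j ≠ 0) := by
      simp only [not_exists]
    rw [hnegA, Finset.card_univ, Fintype.card_fun, hF, Fintype.card_fin] at hsplitA
    have hsplitB := Finset.card_filter_add_card_filter_not
      (s := Finset.univ.filter (fun q : Fin 4 → F => ∃ j, psi ω α q j = 0))
      (fun q : Fin 4 → F => q = 0)
    have hone : ((Finset.univ.filter fun q : Fin 4 → F => ∃ j, psi ω α q j = 0).filter
        fun q => q = 0) = {0} := by
      ext q
      simp only [Finset.mem_filter, Finset.mem_univ, true_and, Finset.mem_singleton]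
      constructor
      · exact fun h => h.2
      · rintro rfl
        exact ⟨⟨0, congrFun hψ0 0⟩, rfl⟩
    have hrest : ((Finset.univ.filter fun q : Fin 4 → F => ∃ j, psi ω α q j = 0).filter
        fun q => ¬ q = 0).card = 4 * (m ^ 2 - 1) := by
      rw [Finset.filter_filter, ← hA', Nat.card_eq_fintype_card, Fintype.card_subtype]
      congr 1
      ext q
      simp only [Finset.mem_filter, Finset.mem_univ, true_and]
      tauto
    rw [hone, hrest, Finset.card_singleton] at hsplitB
    rw [Nat.card_eq_fintype_card, Fintype.card_subtype]
    have hid : (m ^ 2 - 3) * (m ^ 2 - 1) + (4 * (m ^ 2 - 1) + 1) = m ^ 4 := by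
      obtain ⟨k, hk⟩ : ∃ k, m ^ 2 = k + 3 :=
        ⟨m ^ 2 - 3, (Nat.sub_add_cancel (le_trans (by norm_num) hm2)).symm⟩
      rw [show m ^ 4 = m ^ 2 * m ^ 2 by ring, hk, show k + 3 - 3 = k from Nat.add_sub_cancel _ _,
        show k + 3 - 1 = k + 2 from rfl]
      ring
    clear * - hsplitA hsplitB hid
    omega
  have hcount4 : Nat.card {c : Fin 4 → K // c ∈ Submodule.span F (Set.range v) ∧
      (Finset.univ.filter fun j => c j ≠ 0).card = 4} = (m ^ 2 - 3) * (m ^ 2 - 1) := by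
    rw [← hB]
    refine Eq.symm (Nat.card_eq_of_bijective (fun w =>
      ⟨psi ω α w.1, (hmem _).mpr ⟨w.1, rfl⟩, by
        have hfe : (Finset.univ.filter fun j => psi ω α w.1 j ≠ 0) = Finset.univ :=
          Finset.filter_true_of_mem (fun j _ => w.2 j)
        rw [hfe, Finset.card_univ, Fintype.card_fin]⟩) ⟨?_, ?_⟩)
    · intro w w' h
      exact Subtype.ext (hψinj (by simpa [Subtype.ext_iff] using h))
    · rintro ⟨c, hcC, hc4⟩
      obtain ⟨q, rfl⟩ := (hmem c).mp hcC
      have huniv : (Finset.univ.filter fun j => psi ω α q j ≠ 0) = Finset.univ :=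
        Finset.eq_univ_of_card _ (by rw [hc4, Fintype.card_fin])
      have hall : ∀ j, psi ω α q j ≠ 0 := by
        intro j
        have : j ∈ Finset.univ.filter fun j => psi ω α q j ≠ 0 := by
          rw [huniv]; exact Finset.mem_univ j
        exact (Finset.mem_filter.mp this).2
      exact ⟨⟨q, hall⟩, rfl⟩
  refine ⟨?_, hcardC, ?_, hcount3, hcount4⟩
  · intro u
    exact ⟨fun hu c hc => hforward u hu c hc, hback u⟩
  -- minimum distance
  intro c hc hc0
  obtain ⟨q, hq⟩ := (hmem c).mp hc
  have hq0 : q ≠ 0 := fun h => hc0 (by rw [← hq, h, hψ0])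
  have hZ : (Finset.univ.filter fun j => c j = 0).card ≤ 1 := by
    rw [Finset.card_le_one]
    intro i hi j hj
    by_contra hij
    exact hq0 (htwo q i j hij
      (by rw [hq]; exact (Finset.mem_filter.mp hi).2)
      (by rw [hq]; exact (Finset.mem_filter.mp hj).2))
  have hsplit := Finset.card_filter_add_card_filter_not
    (s := (Finset.univ : Finset (Fin 4))) (fun j => c j ≠ 0)
  have hneg : (Finset.univ.filter fun j => ¬ c j ≠ 0) =
      (Finset.univ.filter fun j => c j = 0) := by simp [not_not]
  rw [hneg] at hsplit
  simp only [Finset.card_univ, Fintype.card_fin] at hsplit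
  clear * - hsplit hZ
  omega
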